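/- arXiv:math/0212183 — 2 statements merged into one kernel-verified Lean document; each statement's English description precedes it below -/
import Mathlib

section
/- Given a geometric classical r-matrix datum on A, for all i,j one has [a¹ᵢ, b¹ⱼ] ∈ span_ℂ{a¹_1,…,a¹_m} + span_ℂ{b¹_1,…,b¹_n}. -/
open TensorProduct

set_option synthInstance.maxHeartbeats 1000000
set_option maxHeartbeats 1000000

/-- A *geometric classical r-matrix datum* on a commutative ℂ-algebra `A`:
finite families `a¹ᵢ, b¹ⱼ` of derivations and `a⁰ᵢ, b⁰ⱼ` of elements of `A`,
each linearly independent over ℂ, satisfying the three components (E1)–(E3)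
of the classical Yang–Baxter equation. -/
structure GeomRMatrixDatum (A : Type*) [CommRing A] [Algebra ℂ A] where
  m : ℕ
  n : ℕ
  a1 : Fin m → Derivation ℂ A A
  a0 : Fin m → A
  b1 : Fin n → Derivation ℂ A A
  b0 : Fin n → A
  indep_a1 : LinearIndependent ℂ a1
  indep_a0 : LinearIndependent ℂ a0
  indep_b1 : LinearIndependent ℂ b1
  indep_b0 : LinearIndependent ℂ b0
  E1 : ∑ i, ∑ k, (⁅a1 i, a1 k⁆ ⊗ₜ[ℂ] (a0 i ⊗ₜ[ℂ] a0 k))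
      = ∑ i, ∑ k, (a1 i ⊗ₜ[ℂ] ((a1 k) (a0 i) ⊗ₜ[ℂ] a0 k))
      + ∑ i, ∑ l, (a1 i ⊗ₜ[ℂ] (b0 l ⊗ₜ[ℂ] (b1 l) (a0 i)))
  E2 : ∑ j, ∑ k, ((a1 k) (b0 j) ⊗ₜ[ℂ] (b1 j ⊗ₜ[ℂ] a0 k))
      = ∑ j, ∑ k, (b0 j ⊗ₜ[ℂ] (⁅b1 j, a1 k⁆ ⊗ₜ[ℂ] a0 k))
      + ∑ j, ∑ k, (b0 j ⊗ₜ[ℂ] (a1 k ⊗ₜ[ℂ] (b1 j) (a0 k)))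
  E3 : ∑ i, ∑ l, ((a1 i) (b0 l) ⊗ₜ[ℂ] (a0 i ⊗ₜ[ℂ] b1 l))
      + ∑ j, ∑ l, (b0 j ⊗ₜ[ℂ] ((b1 j) (b0 l) ⊗ₜ[ℂ] b1 l))
      + ∑ j, ∑ l, (b0 j ⊗ₜ[ℂ] (b0 l ⊗ₜ[ℂ] ⁅b1 j, b1 l⁆)) = 0

variable {A : Type*} [CommRing A] [Algebra ℂ A]

/-- `V₁ = span_ℂ{a⁰ᵢ}`. -/
def GeomRMatrixDatum.V1 (D : GeomRMatrixDatum A) : Submodule ℂ A :=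
  Submodule.span ℂ (Set.range D.a0)

/-- `V₂ = span_ℂ{b⁰ⱼ}`. -/
def GeomRMatrixDatum.V2 (D : GeomRMatrixDatum A) : Submodule ℂ A :=
  Submodule.span ℂ (Set.range D.b0)

/-- `V = V₁ + V₂`. -/
def GeomRMatrixDatum.V (D : GeomRMatrixDatum A) : Submodule ℂ A := D.V1 ⊔ D.V2

theorem GeomRMatrixDatum.a0_mem_V (D : GeomRMatrixDatum A) (i : Fin D.m) :
    D.a0 i ∈ D.V :=
  Submodule.mem_sup_left (Submodule.subset_span (Set.mem_range_self i))

theorem GeomRMatrixDatum.b0_mem_V (D : GeomRMatrixDatum A) (j : Fin D.n) :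
    D.b0 j ∈ D.V :=
  Submodule.mem_sup_right (Submodule.subset_span (Set.mem_range_self j))

/-- Dual functional to a linearly independent family over a field. -/
lemma exists_dual_functional {ι : Type*} [DecidableEq ι] {f : ι → A} (hf : LinearIndependent ℂ f) (i : ι) :
    ∃ φ : A →ₗ[ℂ] ℂ, ∀ k, φ (f k) = if k = i then 1 else 0 := by
  have hs : LinearIndepOn ℂ id (Set.range f) := hf.linearIndepOn_id
  let b := Module.Basis.extend hs
  have hmem : ∀ k, f k ∈ hs.extend (Set.subset_univ _) := fun k =>
    hs.subset_extend _ ⟨k, rfl⟩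
  classical
  refine ⟨b.coord ⟨f i, hmem i⟩, fun k => ?_⟩
  have hfk : f k = b ⟨f k, hmem k⟩ := (Module.Basis.extend_apply_self hs ⟨f k, hmem k⟩).symm
  rw [hfk, Module.Basis.coord_apply, Module.Basis.repr_self, Finsupp.single_apply]
  simp [Subtype.ext_iff, hf.injective.eq_iff]

/-- Contraction `x ⊗ d ⊗ y ↦ lam x • mu y • d`. -/
noncomputable def contractMap (lam mu : A →ₗ[ℂ] ℂ) :
    A ⊗[ℂ] (Derivation ℂ A A ⊗[ℂ] A) →ₗ[ℂ] Derivation ℂ A A :=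
  TensorProduct.lift <| lam.smulRight <| TensorProduct.lift <|
    ((LinearMap.lsmul ℂ (Derivation ℂ A A)).comp mu).flip

@[simp] lemma contractMap_tmul (lam mu : A →ₗ[ℂ] ℂ) (x : A) (d : Derivation ℂ A A) (y : A) :
    contractMap (A := A) lam mu (x ⊗ₜ[ℂ] (d ⊗ₜ[ℂ] y)) = lam x • mu y • d := by
  simp [contractMap]

/-- `[a¹ᵢ, b¹ⱼ]` lies in `span{a¹} + span{b¹}`. -/
theorem bracket_a1_b1_mem (D : GeomRMatrixDatum A) (i : Fin D.m) (j : Fin D.n) :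
    ⁅D.a1 i, D.b1 j⁆
      ∈ Submodule.span ℂ (Set.range D.a1) ⊔ Submodule.span ℂ (Set.range D.b1) := by
  obtain ⟨lam, hlam⟩ := exists_dual_functional D.indep_b0 j
  obtain ⟨mu, hmu⟩ := exists_dual_functional D.indep_a0 i
  have hE2 := congrArg (contractMap (A := A) lam mu) D.E2
  simp only [map_sum, map_add, contractMap_tmul, hlam, hmu] at hE2
  simp only [ite_smul, one_smul, zero_smul, smul_zero, smul_ite, Finset.sum_ite_irrel,
    Finset.sum_const_zero, Finset.sum_ite_eq', Finset.mem_univ, if_true] at hE2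
  have hkey : ⁅D.b1 j, D.a1 i⁆
      = (∑ l, lam ((D.a1 i) (D.b0 l)) • D.b1 l) - ∑ k, mu ((D.b1 j) (D.a0 k)) • D.a1 k := by
    rw [eq_sub_iff_add_eq, ← hE2]
  have h1 : (∑ l, lam ((D.a1 i) (D.b0 l)) • D.b1 l)
      ∈ Submodule.span ℂ (Set.range D.a1) ⊔ Submodule.span ℂ (Set.range D.b1) := by
    refine Submodule.sum_mem _ fun l _ => Submodule.smul_mem _ _ ?_
    exact Submodule.mem_sup_right (Submodule.subset_span ⟨l, rfl⟩)
  have h2 : (∑ k, mu ((D.b1 j) (D.a0 k)) • D.a1 k)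
      ∈ Submodule.span ℂ (Set.range D.a1) ⊔ Submodule.span ℂ (Set.range D.b1) := by
    refine Submodule.sum_mem _ fun k _ => Submodule.smul_mem _ _ ?_
    exact Submodule.mem_sup_left (Submodule.subset_span ⟨k, rfl⟩)
  have : ⁅D.a1 i, D.b1 j⁆ = -⁅D.b1 j, D.a1 i⁆ := (lie_skew _ _).symm
  rw [this, hkey]
  exact Submodule.neg_mem _ (Submodule.sub_mem _ h1 h2)
end

section
/- Given a geometric classical r-matrix datum on A with V invariant under every a¹ᵢ and b¹ⱼ, the operation ⋆ acts by derivations of the bracket: for all x,y,z ∈ V*, x⋆[y,z] = [x⋆y, z] + [y, x⋆z] in V*. -/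
open TensorProduct

set_option synthInstance.maxHeartbeats 1000000
set_option maxHeartbeats 1000000

variable {A : Type*} [CommRing A] [Algebra ℂ A]

/-- The operation `(x⋆y)(f) = Σᵢ x(a⁰ᵢ)·y(a¹ᵢ f)` on `V* = Module.Dual ℂ V`. -/
noncomputable def starOp (D : GeomRMatrixDatum A)
    (hA : ∀ i : Fin D.m, ∀ f ∈ D.V, D.a1 i f ∈ D.V)
    (x y : Module.Dual ℂ D.V) : Module.Dual ℂ D.V :=
  ∑ i, x ⟨D.a0 i, D.a0_mem_V i⟩ • (y ∘ₗ ((D.a1 i).toLinearMap.restrict (hA i)))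

/-- The operation `(x∘y)(f) = Σⱼ y(b⁰ⱼ)·x(b¹ⱼ f)` on `V* = Module.Dual ℂ V`. -/
noncomputable def circOp (D : GeomRMatrixDatum A)
    (hB : ∀ j : Fin D.n, ∀ f ∈ D.V, D.b1 j f ∈ D.V)
    (x y : Module.Dual ℂ D.V) : Module.Dual ℂ D.V :=
  ∑ j, y ⟨D.b0 j, D.b0_mem_V j⟩ • (x ∘ₗ ((D.b1 j).toLinearMap.restrict (hB j)))

/-- The bracket `[x,y] = x∘y + y⋆x` on `V*`. -/
noncomputable def bracketOp (D : GeomRMatrixDatum A)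
    (hA : ∀ i : Fin D.m, ∀ f ∈ D.V, D.a1 i f ∈ D.V)
    (hB : ∀ j : Fin D.n, ∀ f ∈ D.V, D.b1 j f ∈ D.V)
    (x y : Module.Dual ℂ D.V) : Module.Dual ℂ D.V :=
  circOp D hB x y + starOp D hA y x


/-- Evaluation of derivations at a fixed element, as a linear map. -/
def evalD {A : Type*} [CommRing A] [Algebra ℂ A] (g : A) :
    Derivation ℂ A A →ₗ[ℂ] A where
  toFun d := d g
  map_add' d e := by simp
  map_smul' c d := by simp

@[simp] theorem evalD_apply {A : Type*} [CommRing A] [Algebra ℂ A] (g : A)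
    (d : Derivation ℂ A A) : evalD g d = d g := rfl

/-- The operation `⋆` acts by derivations of the bracket:
`x⋆[y,z] = [x⋆y, z] + [y, x⋆z]`. -/
theorem star_acts_by_derivations (D : GeomRMatrixDatum A)
    (hA : ∀ i : Fin D.m, ∀ f ∈ D.V, D.a1 i f ∈ D.V)
    (hB : ∀ j : Fin D.n, ∀ f ∈ D.V, D.b1 j f ∈ D.V)
    (x y z : Module.Dual ℂ D.V) :
    starOp D hA x (bracketOp D hA hB y z)
      = bracketOp D hA hB (starOp D hA x y) z
        + bracketOp D hA hB y (starOp D hA x z) := by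
  obtain ⟨q, hq⟩ := Submodule.exists_isCompl D.V
  set X : A →ₗ[ℂ] ℂ := x ∘ₗ (D.V.projectionOnto q hq) with hXdef
  set Y : A →ₗ[ℂ] ℂ := y ∘ₗ (D.V.projectionOnto q hq) with hYdef
  set Z : A →ₗ[ℂ] ℂ := z ∘ₗ (D.V.projectionOnto q hq) with hZdef
  have hX : ∀ (g : A) (h : g ∈ D.V), x ⟨g, h⟩ = X g := fun g h => by
    simp [hXdef]
    exact congrArg x (Submodule.projectionOnto_apply_left hq ⟨g, h⟩).symm
  have hY : ∀ (g : A) (h : g ∈ D.V), y ⟨g, h⟩ = Y g := fun g h => by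
    simp [hYdef]
    exact congrArg y (Submodule.projectionOnto_apply_left hq ⟨g, h⟩).symm
  have hZ : ∀ (g : A) (h : g ∈ D.V), z ⟨g, h⟩ = Z g := fun g h => by
    simp [hZdef]
    exact congrArg z (Submodule.projectionOnto_apply_left hq ⟨g, h⟩).symm
  ext f
  simp only [starOp, circOp, bracketOp, LinearMap.add_apply, LinearMap.sum_apply,
    LinearMap.smul_apply, LinearMap.comp_apply, LinearMap.restrict_apply, smul_eq_mul,
    hX, hY, hZ]
  -- the tensor evaluation maps
  set g : A := (f : A) with hg
  set B : A →ₗ[ℂ] A →ₗ[ℂ] ℂ := LinearMap.mk₂ ℂ (fun u v => Z u * X v)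
    (fun u u' v => by simp [add_mul]) (fun c u v => by simp [smul_eq_mul]; ring)
    (fun u v v' => by simp [mul_add]) (fun c u v => by simp [smul_eq_mul]; ring) with hBdef
  set C : Derivation ℂ A A →ₗ[ℂ] A →ₗ[ℂ] ℂ := LinearMap.mk₂ ℂ (fun d v => Y (d g) * X v)
    (fun d d' v => by simp [add_mul]) (fun c d v => by simp [smul_eq_mul]; ring)
    (fun d v v' => by simp [mul_add]) (fun c d v => by simp [smul_eq_mul]; ring) with hCdef
  set Φ₁ : (Derivation ℂ A A) ⊗[ℂ] (A ⊗[ℂ] A) →ₗ[ℂ] ℂ :=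
    TensorProduct.lift ((Y.comp (evalD g)).smulRight (TensorProduct.lift B)) with hP1
  set Φ₂ : A ⊗[ℂ] ((Derivation ℂ A A) ⊗[ℂ] A) →ₗ[ℂ] ℂ :=
    TensorProduct.lift (Z.smulRight (TensorProduct.lift C)) with hP2
  have hE1 := congrArg Φ₁ D.E1
  have hE2 := congrArg Φ₂ D.E2
  simp only [hP1, hP2, map_sum, map_add, TensorProduct.lift.tmul,
    LinearMap.smulRight_apply, LinearMap.comp_apply, evalD_apply, LinearMap.smul_apply,
    hBdef, hCdef, LinearMap.mk₂_apply, smul_eq_mul] at hE1 hE2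
  simp only [Derivation.commutator_apply, map_sub, sub_mul, mul_sub,
    Finset.sum_sub_distrib] at hE1 hE2
  simp only [Derivation.coeFn_coe]
  simp only [mul_add, Finset.sum_add_distrib, Finset.mul_sum, Finset.sum_mul]
  have hT1 : (∑ k : Fin D.m, ∑ j : Fin D.n,
        X (D.a0 k) * (Z (D.b0 j) * Y ((D.b1 j) ((D.a1 k) g))))
      = ∑ j : Fin D.n, ∑ k : Fin D.m,
        X (D.a0 k) * (Z (D.b0 j) * Y ((D.b1 j) ((D.a1 k) g))) := Finset.sum_comm
  have hT2 : (∑ k : Fin D.m, ∑ i : Fin D.m,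
        X (D.a0 k) * (Z (D.a0 i) * Y ((D.a1 i) ((D.a1 k) g))))
      = ∑ i : Fin D.m, ∑ k : Fin D.m,
        X (D.a0 k) * (Z (D.a0 i) * Y ((D.a1 i) ((D.a1 k) g))) := Finset.sum_comm
  have hswap : (∑ i : Fin D.m, ∑ l : Fin D.n,
        Y ((D.a1 i) g) * (Z (D.b0 l) * X ((D.b1 l) (D.a0 i))))
      = ∑ l : Fin D.n, ∑ i : Fin D.m,
        Y ((D.a1 i) g) * (Z (D.b0 l) * X ((D.b1 l) (D.a0 i))) := Finset.sum_comm
  rw [hT1, hT2]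
  simp only [mul_comm, mul_left_comm, mul_assoc] at hE1 hE2 hswap ⊢
  linear_combination hE1 - hE2 + hswap
end
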